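/- Let p be a monic polynomial of degree n with real coefficients and let 0 < α < 1. Then the maximum of |p(x)| over x in [-α, α] is at least α^n / 2^(n-1). -/

import Mathlib

open Polynomial Real


lemma cheb_deg_lc (n : ℕ) : (Chebyshev.T ℝ ((n:ℤ)+1)).natDegree = n+1 ∧
    (Chebyshev.T ℝ ((n:ℤ)+1)).leadingCoeff = 2^n := by
  induction n using Nat.twoStepInduction with
  | zero => simp [Chebyshev.T_one]
  | one =>
    have h2 : ((1:ℕ):ℤ) + 1 = 2 := by norm_num
    rw [h2, Chebyshev.T_two]
    have hd : (2 * X ^ 2 - 1 : ℝ[X]).natDegree = 2 := by compute_degree!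
    refine ⟨hd, ?_⟩
    rw [Polynomial.leadingCoeff, hd]
    simp [Polynomial.coeff_one]
  | more m ih1 ih2 =>
    obtain ⟨hd2, hl2⟩ := ih1
    obtain ⟨hd1, hl1⟩ := ih2
    push_cast at hd1 hl1 hd2 hl2 ⊢
    have hrec : Chebyshev.T ℝ ((m:ℤ)+2+1) = 2 * X * (Chebyshev.T ℝ ((m:ℤ)+1+1)) - Chebyshev.T ℝ ((m:ℤ)+1) := by
      have := Chebyshev.T_add_two ℝ ((m:ℤ)+1)
      convert this using 2 <;> ring
    rw [hrec]
    have hT1ne : Chebyshev.T ℝ ((m:ℤ)+1+1) ≠ 0 := by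
      intro h; rw [h] at hl1; simp at hl1; exact (pow_ne_zero _ two_ne_zero) hl1.symm
    have hA : (2 * X * Chebyshev.T ℝ ((m:ℤ)+1+1)).natDegree = m + 3 := by
      rw [natDegree_mul (by intro h; simpa using h) hT1ne]
      have h2x : (2 * X : ℝ[X]).natDegree = 1 := by compute_degree!
      rw [h2x, hd1]; ring
    have hAne : (2 * X * Chebyshev.T ℝ ((m:ℤ)+1+1)) ≠ 0 := by
      intro h; rw [h] at hA; simp at hA
    have hAl : (2 * X * Chebyshev.T ℝ ((m:ℤ)+1+1)).leadingCoeff = 2 ^ (m+2) := by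
      rw [leadingCoeff_mul, hl1]
      have h2x : (2 * X : ℝ[X]).leadingCoeff = 2 := by
        have h2C : (2:ℝ[X]) = C 2 := (map_ofNat C 2).symm
        rw [leadingCoeff_mul, h2C, leadingCoeff_C, leadingCoeff_X, mul_one]
      rw [h2x]; ring
    have hlt : (Chebyshev.T ℝ ((m:ℤ)+1)).natDegree < (2 * X * Chebyshev.T ℝ ((m:ℤ)+1+1)).natDegree := by
      rw [hA, hd2]; omega
    have hdeg : (2 * X * Chebyshev.T ℝ ((m:ℤ)+1+1) - Chebyshev.T ℝ ((m:ℤ)+1)).natDegree = m + 3 := by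
      rw [natDegree_sub_eq_left_of_natDegree_lt hlt, hA]
    refine ⟨by rw [hdeg], ?_⟩
    rw [leadingCoeff, hdeg, coeff_sub, coeff_eq_zero_of_natDegree_lt (p := Chebyshev.T ℝ ((m:ℤ)+1)) (by rw [hd2]; omega), sub_zero,
      show m + 3 = (2 * X * Chebyshev.T ℝ ((m:ℤ)+1+1)).natDegree from hA.symm, ← leadingCoeff, hAl]


/-- Scaled Chebyshev minimax bound: a monic real polynomial of degree `n` attains absolute
value at least `α^n / 2^(n-1)` somewhere on `[-α, α]`, for `0 < α < 1`. -/
theorem stmt_1 (n : ℕ) (p : Polynomial ℝ) (hmonic : p.Monic) (hdeg : p.natDegree = n)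
    (α : ℝ) (hα0 : 0 < α) (hα1 : α < 1) :
    ∃ x ∈ Set.Icc (-α) α, α ^ n / 2 ^ (n - 1) ≤ |p.eval x| := by
  rcases Nat.eq_zero_or_pos n with hn | hn
  · subst hn
    refine ⟨0, by constructor <;> linarith, ?_⟩
    rw [(hmonic.natDegree_eq_zero).mp hdeg]
    simp
  by_contra hcon
  push_neg at hcon
  set c : ℝ := α ^ n / 2 ^ (n - 1) with hc
  have hcpos : 0 < c := by positivity
  -- Chebyshev facts
  obtain ⟨hTd, hTl⟩ := cheb_deg_lc (n - 1)
  have hcast : ((n - 1 : ℕ) : ℤ) + 1 = (n : ℤ) := by omega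
  rw [hcast] at hTd hTl
  have hn1 : n - 1 + 1 = n := by omega
  rw [hn1] at hTd
  set Tn : ℝ[X] := Chebyshev.T ℝ (n : ℤ) with hTn
  -- the scaled Chebyshev polynomial
  set S : ℝ[X] := C c * Tn.comp (C α⁻¹ * X) with hS
  have hq_deg : (C α⁻¹ * X : ℝ[X]).natDegree = 1 := by
    rw [natDegree_C_mul (by positivity), natDegree_X]
  have hq_lc : (C α⁻¹ * X : ℝ[X]).leadingCoeff = α⁻¹ := by
    rw [leadingCoeff_mul, leadingCoeff_C, leadingCoeff_X, mul_one]
  have hSdeg : S.natDegree = n := by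
    rw [hS, natDegree_C_mul (ne_of_gt hcpos), natDegree_comp, hq_deg, hTd, mul_one]
  have hSlc : S.leadingCoeff = 1 := by
    rw [hS, leadingCoeff_mul, leadingCoeff_C, leadingCoeff_comp (by rw [hq_deg]; norm_num),
      hq_lc, hTl, hTd, hc]
    field_simp
    rw [← mul_pow, mul_one_div_cancel hα0.ne', one_pow]
  -- evaluation of S at α * cos θ
  have hSeval : ∀ θ : ℝ, S.eval (α * Real.cos θ) = c * Real.cos (n * θ) := by
    intro θ
    rw [hS, eval_mul, eval_C, eval_comp, eval_mul, eval_C, eval_X]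
    rw [show α⁻¹ * (α * Real.cos θ) = Real.cos θ by field_simp]
    rw [hTn, Chebyshev.T_real_cos]
    norm_num
  -- nodes
  set x : ℕ → ℝ := fun k => α * Real.cos (k * π / n) with hx
  have hnR : (0:ℝ) < n := by exact_mod_cast hn
  have hxmem : ∀ k, x k ∈ Set.Icc (-α) α := by
    intro k
    have h1 := Real.neg_one_le_cos ((k:ℝ) * π / n)
    have h2 := Real.cos_le_one ((k:ℝ) * π / n)
    simp only [hx]
    constructor <;> nlinarith
  have hSx : ∀ k : ℕ, S.eval (x k) = c * (-1) ^ k := by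
    intro k
    rw [hx]
    simp only
    rw [hSeval]
    congr 1
    rw [show (n:ℝ) * ((k:ℝ) * π / n) = (k:ℝ) * π by field_simp]
    have := Real.cos_add_int_mul_pi 0 (k : ℤ)
    simpa using this
  -- p ≠ S
  have hpS : p ≠ S := by
    intro h
    have h0 : x 0 = α := by simp [hx]
    have := hcon (x 0) (hxmem 0)
    rw [h, hSx 0] at this
    simp at this
    rw [abs_of_pos hcpos] at this
    exact lt_irrefl _ this
  set d : ℝ[X] := p - S with hd'
  have hdne : d ≠ 0 := sub_ne_zero.mpr hpS
  have hddeg : d.natDegree < n := by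
    have h1 : d.degree < p.degree := by
      apply degree_sub_lt _ hmonic.ne_zero
      · rw [hmonic.leadingCoeff, hSlc]
      · rw [degree_eq_natDegree hmonic.ne_zero, degree_eq_natDegree (fun h => by
          rw [h] at hSlc; simp at hSlc), hdeg, hSdeg]
    rw [degree_eq_natDegree hmonic.ne_zero, hdeg] at h1
    exact (natDegree_lt_iff_degree_lt hdne).mpr h1
  -- sign of d at nodes
  have hsign : ∀ k, k ≤ n → (Even k → d.eval (x k) < 0) ∧ (Odd k → 0 < d.eval (x k)) := by
    intro k _
    have habs := hcon (x k) (hxmem k)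
    have h1 : -c < p.eval (x k) := by
      have := abs_lt.mp habs; exact this.1
    have h2 : p.eval (x k) < c := (abs_lt.mp habs).2
    constructor
    · intro he
      rw [hd', eval_sub, hSx k, he.neg_one_pow]
      linarith
    · intro ho
      rw [hd', eval_sub, hSx k, ho.neg_one_pow]
      linarith
  -- nodes strictly decreasing
  have hxanti : ∀ j k : ℕ, j < k → k ≤ n → x k < x j := by
    intro j k hjk hkn
    rw [hx]
    simp only
    apply mul_lt_mul_of_pos_left _ hα0
    apply Real.cos_lt_cos_of_nonneg_of_le_pi
    · positivity
    · rw [div_le_iff₀ hnR]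
      have : (k:ℝ) ≤ n := by exact_mod_cast hkn
      nlinarith [Real.pi_pos]
    · refine (div_lt_div_iff_of_pos_right hnR).mpr ?_
      have hjkR : (j:ℝ) < k := by exact_mod_cast hjk
      nlinarith [Real.pi_pos]
  have hxle : ∀ j k : ℕ, j ≤ k → k ≤ n → x k ≤ x j := by
    intro j k hjk hkn
    rcases eq_or_lt_of_le hjk with rfl | h
    · exact le_rfl
    · exact (hxanti j k h hkn).le
  have hroot : ∀ k, k < n → ∃ y, (x (k+1) < y ∧ y < x k) ∧ d.eval y = 0 := by
    intro k hk
    have hlt : x (k+1) < x k := hxanti k (k+1) (Nat.lt_succ_self k) hk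
    rcases Nat.even_or_odd k with he | ho
    · have h1 : 0 < d.eval (x (k+1)) := (hsign (k+1) hk).2 he.add_one
      have h2 : d.eval (x k) < 0 := (hsign k hk.le).1 he
      obtain ⟨y, hy, hy0⟩ := intermediate_value_Ioo' hlt.le
        ((Polynomial.continuous d).continuousOn) (⟨h2, h1⟩ : (0:ℝ) ∈ Set.Ioo _ _)
      exact ⟨y, ⟨hy.1, hy.2⟩, hy0⟩
    · have h1 : d.eval (x (k+1)) < 0 := (hsign (k+1) hk).1 ho.add_one
      have h2 : 0 < d.eval (x k) := (hsign k hk.le).2 ho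
      obtain ⟨y, hy, hy0⟩ := intermediate_value_Ioo hlt.le
        ((Polynomial.continuous d).continuousOn) (⟨h1, h2⟩ : (0:ℝ) ∈ Set.Ioo _ _)
      exact ⟨y, ⟨hy.1, hy.2⟩, hy0⟩
  choose! y hy1 hy2 using hroot
  have hyanti : ∀ j k : ℕ, j < k → k < n → y k < y j := by
    intro j k hjk hkn
    have h1 : y k < x k := (hy1 k hkn).2
    have h2 : x (j+1) < y j := (hy1 j (lt_trans hjk hkn)).1
    have h3 : x k ≤ x (j+1) := hxle (j+1) k hjk (le_of_lt hkn)
    linarith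
  have hinj : Function.Injective (fun k : Fin n => y k) := by
    intro a b hab
    simp only at hab
    rcases lt_trichotomy (a:ℕ) (b:ℕ) with h|h|h
    · exact absurd hab (ne_of_gt (hyanti a b h b.isLt))
    · exact Fin.ext h
    · exact absurd hab (ne_of_lt (hyanti b a h a.isLt))
  exact hdne (eq_zero_of_natDegree_lt_card_of_eval_eq_zero d hinj
    (fun k => hy2 k k.isLt) (by simpa using hddeg))
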